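/- Fix z ∈ ℝ with f(z) > 0, and define Ã(z) = (∫∫ x·y·∂₃p(x,y,z) dx dy)/f(z), B̃(z) = (∫∫ x·y²·∂₃²p(x,y,z) dx dy)/f(z), C̃(z) = (∫∫ y·∂₃p(x,y,z) dx dy)/f(z), D̃(z) = (∫∫ y²·∂₃²p(x,y,z) dx dy)/f(z). Suppose that, as τ → 0, the functions N(τ) := ∫∫ x·p(x,y,z−τ·y) dx dy and D(τ) := ∫∫ p(x,y,z−τ·y) dx dy satisfy N(τ) = f(z)·m(z) − τ·f(z)·Ã(z) + (τ²/2)·f(z)·B̃(z) + o(τ²) and D(τ) = f(z) − τ·f(z)·C̃(z) + (τ²/2)·f(z)·D̃(z) + o(τ²) (little-o along 𝓝 0). Then, as τ → 0, N(τ)/D(τ) = m(z) + τ·L + (τ²/2)·F + o(τ²), where L = C̃(z)·m(z) − Ã(z) and F = B̃(z) − 2·Ã(z)·C̃(z) + (2·C̃(z)² − D̃(z))·m(z). -/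
import Mathlib


open Asymptotics Filter Topology MeasureTheory

/-- Proposition 1 (second-order approximation of the conditional expectation), at the level
of densities: given second-order expansions of the numerator `N(τ) = ∫∫ x·p(x,y,z−τy)` and
the denominator `D(τ) = ∫∫ p(x,y,z−τy)` of the conditional-expectation ratio, the ratio
expands as `m(z) + τ·L + (τ²/2)·F + o(τ²)` with `L = C̃·m − Ã` and
`F = B̃ − 2·Ã·C̃ + (2·C̃² − D̃)·m`. Here `p₁`, `p₂` are the first and second partial
derivatives of `p` in its third argument. -/
theorem conditional_expectation_second_order_approx (z : ℝ) (p p₁ p₂ : ℝ × ℝ × ℝ → ℝ)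
    (hp : Measurable p) (hp_nonneg : ∀ q, 0 ≤ p q)
    (hp₁ : Measurable p₁) (hp₂ : Measurable p₂)
    (hderiv1 : ∀ x y s : ℝ, HasDerivAt (fun t => p (x, y, t)) (p₁ (x, y, s)) s)
    (hderiv2 : ∀ x y s : ℝ, HasDerivAt (fun t => p₁ (x, y, t)) (p₂ (x, y, s)) s)
    (f m A B C D' : ℝ)
    (hf : f = ∫ q : ℝ × ℝ, p (q.1, q.2, z))
    (hfpos : 0 < f)
    (hm : m = (∫ q : ℝ × ℝ, q.1 * p (q.1, q.2, z)) / f)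
    (hA : A = (∫ q : ℝ × ℝ, q.1 * q.2 * p₁ (q.1, q.2, z)) / f)
    (hB : B = (∫ q : ℝ × ℝ, q.1 * q.2 ^ 2 * p₂ (q.1, q.2, z)) / f)
    (hC : C = (∫ q : ℝ × ℝ, q.2 * p₁ (q.1, q.2, z)) / f)
    (hD' : D' = (∫ q : ℝ × ℝ, q.2 ^ 2 * p₂ (q.1, q.2, z)) / f)
    (N D : ℝ → ℝ)
    (hN : ∀ τ : ℝ, N τ = ∫ q : ℝ × ℝ, q.1 * p (q.1, q.2, z - τ * q.2))
    (hD : ∀ τ : ℝ, D τ = ∫ q : ℝ × ℝ, p (q.1, q.2, z - τ * q.2))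
    (hNexp : (fun τ : ℝ => N τ - (f * m - τ * (f * A) + τ ^ 2 / 2 * (f * B)))
      =o[𝓝 (0 : ℝ)] fun τ => τ ^ 2)
    (hDexp : (fun τ : ℝ => D τ - (f - τ * (f * C) + τ ^ 2 / 2 * (f * D')))
      =o[𝓝 (0 : ℝ)] fun τ => τ ^ 2) :
    (fun τ : ℝ => N τ / D τ -
        (m + τ * (C * m - A) +
          τ ^ 2 / 2 * (B - 2 * A * C + (2 * C ^ 2 - D') * m)))
      =o[𝓝 (0 : ℝ)] fun τ => τ ^ 2 := by

  -- Abbreviation for the target second-order polynomial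
  set Qf : ℝ → ℝ := fun τ =>
    m + τ * (C * m - A) + τ ^ 2 / 2 * (B - 2 * A * C + (2 * C ^ 2 - D') * m) with hQf
  -- τ ↦ τ tends to 0
  have hτo : (fun τ : ℝ => τ) =o[𝓝 (0 : ℝ)] (fun _ => (1 : ℝ)) := by
    rw [isLittleO_one_iff]
    exact tendsto_id
  have hτ2o : (fun τ : ℝ => τ ^ 2) =o[𝓝 (0 : ℝ)] (fun _ => (1 : ℝ)) := by
    rw [isLittleO_one_iff]
    simpa using ((continuous_pow 2).tendsto (0 : ℝ))
  -- τ³ and τ⁴ are o(τ²)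
  have hcube : (fun τ : ℝ => τ ^ 3) =o[𝓝 (0 : ℝ)] fun τ => τ ^ 2 := by
    have := hτo.mul_isBigO (isBigO_refl (fun τ : ℝ => τ ^ 2) (𝓝 (0 : ℝ)))
    refine this.congr (fun τ => by ring) (fun τ => by ring)
  have hquart : (fun τ : ℝ => τ ^ 4) =o[𝓝 (0 : ℝ)] fun τ => τ ^ 2 := by
    have := hτ2o.mul_isBigO (isBigO_refl (fun τ : ℝ => τ ^ 2) (𝓝 (0 : ℝ)))
    refine this.congr (fun τ => by ring) (fun τ => by ring)
  -- Qf is O(1) near 0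
  have hQcont : Continuous Qf := by
    rw [hQf]; fun_prop
  have hQO : Qf =O[𝓝 (0 : ℝ)] (fun _ => (1 : ℝ)) := (hQcont.tendsto 0).isBigO_one ℝ
  -- D tends to f
  have hdsmall : Tendsto (fun τ : ℝ => D τ - (f - τ * (f * C) + τ ^ 2 / 2 * (f * D')))
      (𝓝 0) (𝓝 0) := by
    rw [← isLittleO_one_iff ℝ]
    exact hDexp.trans hτ2o
  have hPdtend : Tendsto (fun τ : ℝ => f - τ * (f * C) + τ ^ 2 / 2 * (f * D')) (𝓝 0) (𝓝 f) := by
    have hc : Continuous (fun τ : ℝ => f - τ * (f * C) + τ ^ 2 / 2 * (f * D')) := by fun_prop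
    have := hc.tendsto 0
    simpa using this
  have hDtend : Tendsto D (𝓝 0) (𝓝 f) := by
    have := hdsmall.add hPdtend
    simpa using this
  have hDne : ∀ᶠ τ in 𝓝 (0 : ℝ), D τ ≠ 0 :=
    hDtend.eventually (eventually_ne_nhds hfpos.ne')
  have hDinvO : (fun τ => (D τ)⁻¹) =O[𝓝 (0 : ℝ)] (fun _ => (1 : ℝ)) :=
    ((hDtend.inv₀ hfpos.ne').isBigO_one ℝ)
  -- the polynomial remainder Pn - Qf * Pd is o(τ²)
  have hpoly : (fun τ : ℝ => (f * m - τ * (f * A) + τ ^ 2 / 2 * (f * B)) -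
      Qf τ * (f - τ * (f * C) + τ ^ 2 / 2 * (f * D'))) =o[𝓝 (0 : ℝ)] fun τ => τ ^ 2 := by
    have h3 := hcube.const_mul_left
      (f * ((B - 2 * A * C + (2 * C ^ 2 - D') * m) * C / 2 - (C * m - A) * D' / 2))
    have h4 := hquart.const_mul_left
      (-(f * (B - 2 * A * C + (2 * C ^ 2 - D') * m) * D' / 4))
    have := h3.add h4
    refine this.congr (fun τ => ?_) (fun τ => rfl)
    rw [hQf]
    ring
  -- Qf times the denominator error is o(τ²)
  have hQd : (fun τ : ℝ => Qf τ *
      (D τ - (f - τ * (f * C) + τ ^ 2 / 2 * (f * D')))) =o[𝓝 (0 : ℝ)] fun τ => τ ^ 2 := by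
    have := hQO.mul_isLittleO hDexp
    refine this.congr (fun τ => rfl) (fun τ => by ring)
  -- main estimate: N - Qf * D = o(τ²)
  have hmain : (fun τ : ℝ => N τ - Qf τ * D τ) =o[𝓝 (0 : ℝ)] fun τ => τ ^ 2 := by
    have := (hNexp.add hpoly).sub hQd
    refine this.congr (fun τ => by ring) (fun τ => rfl)
  -- divide by D
  have hfinal : (fun τ : ℝ => (N τ - Qf τ * D τ) * (D τ)⁻¹) =o[𝓝 (0 : ℝ)] fun τ => τ ^ 2 := by
    have := hmain.mul_isBigO hDinvO
    refine this.congr (fun τ => rfl) (fun τ => by ring)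
  refine hfinal.congr' ?_ EventuallyEq.rfl
  filter_upwards [hDne] with τ hτ
  field_simp
  ring
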